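/- arXiv:1805.06936 — 2 statements merged into one kernel-verified Lean document; each statement's English description precedes it below -/
import Mathlib

section
/- For every integer n ≥ 1, every t > 0, every M > 0, and all ξ₁, …, ξ_n ∈ ℝ, the iterated integral over the simplex satisfies ∫_{0<t₁<⋯<t_n<t} ∏_{j=1}^{n} S(t_{j+1} − t_j, ξ_j) dt₁ ⋯ dt_n ≤ e^{Mt} (2/M)ⁿ ∏_{j=1}^{n} 1/(M² + 4 ξ_j²), where the convention t_{n+1} = t is used. -/
open MeasureTheory
open scoped ENNReal BigOperators

/-- `S(u,ξ) = sin²(uξ)/ξ²` for `ξ ≠ 0`, `S(u,0) = u²`. -/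
noncomputable def waveS (u ξ : ℝ) : ℝ :=
  if ξ = 0 then u ^ 2 else Real.sin (u * ξ) ^ 2 / ξ ^ 2

/-- The open simplex `{0 < t₁ < ⋯ < t_n < t}` in `ℝⁿ`. -/
def simplex (n : ℕ) (t : ℝ) : Set (Fin n → ℝ) :=
  {u | (∀ i, 0 < u i ∧ u i < t) ∧ ∀ i j : Fin n, i < j → u i < u j}

/-- `t_{j+1}`, with the convention `t_{n+1} = t`. -/
noncomputable def nextVal {n : ℕ} (t : ℝ) (u : Fin n → ℝ) (j : Fin n) : ℝ :=
  if h : (j : ℕ) + 1 < n then u ⟨(j : ℕ) + 1, h⟩ else t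

open Set Real Filter

lemma waveS_nonneg (u ξ : ℝ) : 0 ≤ waveS u ξ := by
  unfold waveS; split <;> positivity

lemma continuous_waveS (ξ : ℝ) : Continuous fun u => waveS u ξ := by
  unfold waveS; split
  · exact continuous_pow 2
  · exact ((Real.continuous_sin.comp (continuous_id.mul continuous_const)).pow 2).div_const _

lemma tendsto_exp_neg_mul {M : ℝ} (hM : 0 < M) :
    Tendsto (fun s : ℝ => Real.exp (-(M * s))) atTop (nhds 0) := by
  apply Real.tendsto_exp_atBot.comp
  exact tendsto_neg_atBot_iff.2 (tendsto_id.const_mul_atTop hM)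

lemma integrableOn_exp_cos {M : ℝ} (hM : 0 < M) (b : ℝ) :
    IntegrableOn (fun s => Real.exp (-(M * s)) * Real.cos (b * s)) (Ioi 0) := by
  apply integrable_of_isBigO_exp_neg hM
  · exact ((Real.continuous_exp.comp (continuous_const.mul continuous_id).neg).mul
      (Real.continuous_cos.comp (continuous_const.mul continuous_id))).continuousOn
  · apply Asymptotics.IsBigO.of_bound 1
    filter_upwards with s
    rw [one_mul, Real.norm_eq_abs, Real.norm_eq_abs, abs_mul, Real.abs_exp, Real.abs_exp,
      neg_mul]
    calc Real.exp (-(M*s)) * |Real.cos (b*s)| ≤ Real.exp (-(M*s)) * 1 := by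
          exact mul_le_mul_of_nonneg_left (Real.abs_cos_le_one _) (Real.exp_nonneg _)
      _ = Real.exp (-(M*s)) := mul_one _

lemma integral_exp_cos {M : ℝ} (hM : 0 < M) (b : ℝ) :
    ∫ s in Ioi (0:ℝ), Real.exp (-(M * s)) * Real.cos (b * s) = M / (M ^ 2 + b ^ 2) := by
  have hD : (0:ℝ) < M ^ 2 + b ^ 2 := by positivity
  set F : ℝ → ℝ := fun s => Real.exp (-(M * s)) * (b * Real.sin (b * s) - M * Real.cos (b * s))
    / (M ^ 2 + b ^ 2) with hF
  have hderiv : ∀ s ∈ Ici (0:ℝ), HasDerivAt F (Real.exp (-(M * s)) * Real.cos (b * s)) s := by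
    intro s _
    have h1 : HasDerivAt (fun s : ℝ => Real.exp (-(M * s))) (Real.exp (-(M*s)) * (-M)) s := by
      simpa using (((hasDerivAt_id s).const_mul M).neg).exp
    have h2 : HasDerivAt (fun s : ℝ => b * Real.sin (b * s) - M * Real.cos (b * s))
        (b * (Real.cos (b * s) * b) - M * (-Real.sin (b * s) * b)) s := by
      have hbs : HasDerivAt (fun s : ℝ => b * s) b s := by simpa using (hasDerivAt_id s).const_mul b
      exact ((hbs.sin.const_mul b).sub (hbs.cos.const_mul M))
    have := (h1.mul h2).div_const (M ^ 2 + b ^ 2)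
    refine this.congr_deriv ?_
    rw [div_eq_iff hD.ne']
    ring
  have htend : Tendsto F atTop (nhds 0) := by
    apply squeeze_zero_norm (a := fun s => Real.exp (-(M * s)) * ((|b| + M) / (M ^ 2 + b ^ 2)))
    · intro s
      rw [hF, Real.norm_eq_abs, abs_div, abs_mul, Real.abs_exp, abs_of_pos hD, mul_div_assoc]
      gcongr
      calc |b * Real.sin (b * s) - M * Real.cos (b * s)|
          ≤ |b * Real.sin (b * s)| + |M * Real.cos (b * s)| := by
            simpa [sub_eq_add_neg, abs_neg] using
              abs_add_le (b * Real.sin (b * s)) (-(M * Real.cos (b * s)))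
        _ ≤ |b| * 1 + M * 1 := by
            rw [abs_mul, abs_mul, abs_of_pos hM]
            gcongr
            exacts [Real.abs_sin_le_one _, Real.abs_cos_le_one _]
        _ = |b| + M := by ring
    · simpa using (tendsto_exp_neg_mul hM).mul_const ((|b| + M) / (M ^ 2 + b ^ 2))
  have := integral_Ioi_of_hasDerivAt_of_tendsto' hderiv (integrableOn_exp_cos hM b) htend
  rw [this, hF]
  simp [Real.exp_zero]
  field_simp

lemma integrableOn_exp_waveS {M : ℝ} (hM : 0 < M) (ξ : ℝ) :
    IntegrableOn (fun s => Real.exp (-(M * s)) * waveS s ξ) (Ioi 0) := by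
  by_cases hξ : ξ = 0
  · subst hξ
    apply integrable_of_isBigO_exp_neg (half_pos hM)
    · exact ((Real.continuous_exp.comp (continuous_const.mul continuous_id).neg).mul
        (continuous_waveS 0)).continuousOn
    · have h0 : Tendsto (fun s : ℝ => s ^ 2 * Real.exp (-(M / 2 * s))) atTop (nhds 0) := by
        have h1 := (tendsto_pow_mul_exp_neg_atTop_nhds_zero 2).comp
          (tendsto_id.const_mul_atTop (half_pos hM))
        have h2 := h1.const_mul ((2 / M) ^ 2)
        rw [mul_zero] at h2
        refine h2.congr fun s => ?_
        simp only [Function.comp_apply, id_eq]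
        field_simp
      apply Asymptotics.IsBigO.of_bound 1
      filter_upwards [h0.eventually_le_const zero_lt_one, eventually_ge_atTop (0:ℝ)]
        with s hs hs0
      rw [one_mul, Real.norm_eq_abs, Real.norm_eq_abs, Real.abs_exp, abs_mul, Real.abs_exp]
      have : Real.exp (-(M * s)) = Real.exp (-(M / 2 * s)) * Real.exp (-(M / 2 * s)) := by
        rw [← Real.exp_add]; ring_nf
      rw [this, neg_mul]
      have hw : |waveS s 0| = s ^ 2 := by
        simp [waveS, abs_of_nonneg (sq_nonneg s)]
      rw [hw]
      calc Real.exp (-(M/2*s)) * Real.exp (-(M/2*s)) * s ^ 2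
          = (s ^ 2 * Real.exp (-(M/2*s))) * Real.exp (-(M/2*s)) := by ring
        _ ≤ 1 * Real.exp (-(M/2*s)) := by
            apply mul_le_mul_of_nonneg_right hs (Real.exp_nonneg _)
        _ = Real.exp (-(M/2 * s)) := one_mul _
  · have hw : ∀ s : ℝ, Real.exp (-(M * s)) * waveS s ξ =
        (1 / (2 * ξ ^ 2)) * (Real.exp (-(M * s)) * Real.cos (0 * s))
        - (1 / (2 * ξ ^ 2)) * (Real.exp (-(M * s)) * Real.cos ((2 * ξ) * s)) := by
      intro s
      have hsin : Real.sin (s * ξ) ^ 2 = 1 / 2 - Real.cos (2 * ξ * s) / 2 := by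
        rw [Real.sin_sq, Real.cos_sq]
        ring_nf
      simp only [waveS, if_neg hξ, hsin, zero_mul, Real.cos_zero]
      field_simp
    simp only [hw]
    exact ((integrableOn_exp_cos hM 0).const_mul _).sub
      ((integrableOn_exp_cos hM (2 * ξ)).const_mul _)

lemma integral_exp_waveS {M : ℝ} (hM : 0 < M) (ξ : ℝ) :
    ∫ s in Ioi (0:ℝ), Real.exp (-(M * s)) * waveS s ξ
      = (2 / M) * (1 / (M ^ 2 + 4 * ξ ^ 2)) := by
  by_cases hξ : ξ = 0
  · subst hξ
    have h3 : (0:ℝ) < 3 := by norm_num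
    have := integral_rpow_mul_exp_neg_mul_Ioi h3 hM
    have heq : ∫ s in Ioi (0:ℝ), Real.exp (-(M * s)) * waveS s 0
        = ∫ t in Ioi (0:ℝ), t ^ ((3:ℝ) - 1) * Real.exp (-(M * t)) := by
      refine setIntegral_congr_fun measurableSet_Ioi (fun s hs => ?_)
      have hs0 : (0:ℝ) ≤ s := le_of_lt hs
      have : s ^ ((3:ℝ) - 1) = s ^ 2 := by norm_num
      rw [this]
      simp [waveS, mul_comm]
    rw [heq, this]
    have hG : Real.Gamma 3 = 2 := by
      rw [show (3:ℝ) = (2:ℕ) + 1 by norm_num, Real.Gamma_nat_eq_factorial]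
      norm_num
    rw [hG]
    rw [show ((1:ℝ)/M) ^ (3:ℝ) = (1/M) ^ (3:ℕ) by
      rw [show (3:ℝ) = ((3:ℕ):ℝ) by norm_num, Real.rpow_natCast]]
    field_simp
    ring
  · have hw : ∀ s : ℝ, Real.exp (-(M * s)) * waveS s ξ =
        (1 / (2 * ξ ^ 2)) * (Real.exp (-(M * s)) * Real.cos (0 * s))
        - (1 / (2 * ξ ^ 2)) * (Real.exp (-(M * s)) * Real.cos ((2 * ξ) * s)) := by
      intro s
      have hsin : Real.sin (s * ξ) ^ 2 = 1 / 2 - Real.cos (2 * ξ * s) / 2 := by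
        rw [Real.sin_sq, Real.cos_sq]
        ring_nf
      simp only [waveS, if_neg hξ, hsin, zero_mul, Real.cos_zero]
      field_simp
    simp only [hw]
    rw [integral_sub (((integrableOn_exp_cos hM 0)).const_mul _)
      (((integrableOn_exp_cos hM (2 * ξ))).const_mul _),
      integral_const_mul, integral_const_mul, integral_exp_cos hM 0, integral_exp_cos hM (2 * ξ)]
    have hD1 : (0:ℝ) < M ^ 2 + (2 * ξ) ^ 2 := by positivity
    have hD2 : (0:ℝ) < M ^ 2 + 4 * ξ ^ 2 := by positivity
    field_simp
    ring
/-- The linear part of the difference map. -/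
def shiftL (n : ℕ) : (Fin n → ℝ) →ₗ[ℝ] (Fin n → ℝ) where
  toFun u := fun j => (if h : (j : ℕ) + 1 < n then u ⟨(j : ℕ) + 1, h⟩ else 0) - u j
  map_add' u v := by
    funext j; by_cases h : (j : ℕ) + 1 < n <;> simp [h] <;> ring
  map_smul' c u := by
    funext j; by_cases h : (j : ℕ) + 1 < n <;> simp [h] <;> ring

lemma shiftL_det (n : ℕ) : LinearMap.det (shiftL n) = (-1) ^ n := by
  classical
  rw [← LinearMap.det_toMatrix']
  rw [Matrix.det_of_upperTriangular (M := LinearMap.toMatrix' (shiftL n)) ?tri]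
  case tri =>
    intro i j hji
    rw [LinearMap.toMatrix'_apply]
    simp only [shiftL, LinearMap.coe_mk, AddHom.coe_mk]
    have hij : ¬ (i = j) := by
      intro h; subst h; exact lt_irrefl _ hji
    by_cases h : (i : ℕ) + 1 < n
    · rw [dif_pos h, Pi.single_apply, Pi.single_apply, if_neg hij, if_neg, sub_zero]
      intro he
      have : (i : ℕ) + 1 = (j : ℕ) := by rw [← he]
      have hj : (j : ℕ) < (i : ℕ) := hji
      omega
    · rw [dif_neg h, Pi.single_apply, if_neg hij, sub_zero]
  · rw [show (-1 : ℝ) ^ n = ∏ _i : Fin n, (-1 : ℝ) by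
      rw [Finset.prod_const, Finset.card_univ, Fintype.card_fin]]
    refine Finset.prod_congr rfl fun i _ => ?_
    rw [LinearMap.toMatrix'_apply]
    simp only [shiftL, LinearMap.coe_mk, AddHom.coe_mk]
    by_cases h : (i : ℕ) + 1 < n
    · have hne : (⟨(i : ℕ) + 1, h⟩ : Fin n) ≠ i := by
        intro he
        have := congrArg Fin.val he
        simp at this
      rw [dif_pos h]
      simp [hne]
    · rw [dif_neg h]
      simp

lemma shiftL_det_ne_zero (n : ℕ) : LinearMap.det (shiftL n) ≠ 0 := by
  rw [shiftL_det]
  simp [pow_ne_zero]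

lemma shiftL_measurePreserving (n : ℕ) :
    MeasurePreserving (shiftL n) (volume : Measure (Fin n → ℝ)) volume := by
  constructor
  · exact (LinearMap.continuous_on_pi _).measurable
  · rw [Real.map_linearMap_volume_pi_eq_smul_volume_pi (shiftL_det_ne_zero n), shiftL_det]
    rw [show |((-1 : ℝ) ^ n)⁻¹| = 1 by
      rw [abs_inv, abs_pow, abs_neg, abs_one, one_pow, inv_one]]
    simp

lemma shiftL_measurableEmbedding (n : ℕ) :
    MeasurableEmbedding (shiftL n) := by
  let e : (Fin n → ℝ) ≃ₗ[ℝ] (Fin n → ℝ) :=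
    (shiftL n).equivOfDetNeZero (shiftL_det_ne_zero n)
  have he : ⇑e = ⇑(shiftL n) := rfl
  have := e.toContinuousLinearEquiv.toHomeomorph.measurableEmbedding
  have hc : ⇑e.toContinuousLinearEquiv.toHomeomorph = ⇑(shiftL n) := by
    rw [← he]; rfl
  rwa [hc] at this

lemma sum_nextVal_sub {n : ℕ} (hn : 1 ≤ n) (t : ℝ) (u : Fin n → ℝ) :
    ∑ j : Fin n, (nextVal t u j - u j) = t - u ⟨0, hn⟩ := by
  set w : ℕ → ℝ := fun k => if h : k < n then u ⟨k, h⟩ else t with hw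
  have h1 : ∀ j : Fin n, nextVal t u j - u j = w ((j : ℕ) + 1) - w (j : ℕ) := by
    intro j
    rw [hw]
    simp only [nextVal, j.isLt, dif_pos]
  rw [Finset.sum_congr rfl fun j _ => h1 j,
    Fin.sum_univ_eq_sum_range (fun k => w (k + 1) - w k) n, Finset.sum_range_sub w]
  rw [hw]
  simp only []
  rw [dif_neg (lt_irrefl n), dif_pos (by omega : 0 < n)]


lemma measurableSet_simplex (n : ℕ) (t : ℝ) : MeasurableSet (simplex n t) := by
  have : simplex n t = (⋂ i, ({u : Fin n → ℝ | 0 < u i} ∩ {u | u i < t})) ∩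
      (⋂ i, ⋂ j, ⋂ (_ : i < j), {u : Fin n → ℝ | u i < u j}) := by
    ext u
    simp only [simplex, Set.mem_setOf_eq, Set.mem_inter_iff, Set.mem_iInter,
      Set.mem_setOf_eq]
  rw [this]
  apply MeasurableSet.inter
  · exact MeasurableSet.iInter fun i =>
      (measurableSet_lt measurable_const (measurable_pi_apply i)).inter
        (measurableSet_lt (measurable_pi_apply i) measurable_const)
  · exact MeasurableSet.iInter fun i => MeasurableSet.iInter fun j =>
      MeasurableSet.iInter fun _ =>
        measurableSet_lt (measurable_pi_apply i) (measurable_pi_apply j)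

theorem stmt5 (n : ℕ) (hn : 1 ≤ n) (t : ℝ) (ht : 0 < t) (M : ℝ) (hM : 0 < M)
    (ξ : Fin n → ℝ) :
    (∫ u in simplex n t, ∏ j : Fin n, waveS (nextVal t u j - u j) (ξ j)) ≤
      Real.exp (M * t) * (2 / M) ^ n * ∏ j : Fin n, 1 / (M ^ 2 + 4 * ξ j ^ 2) := by
  classical
  have hms := measurableSet_simplex n t
  -- the difference map
  set T : (Fin n → ℝ) → (Fin n → ℝ) := fun u j => nextVal t u j - u j with hT
  -- one-dimensional integrands
  set φ : Fin n → ℝ → ℝ := fun j s => Real.exp (-(M * s)) * waveS s (ξ j) with hφ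
  set f : Fin n → ℝ → ℝ := fun j => (Ioi (0:ℝ)).indicator (φ j) with hf
  have hfint : ∀ j, Integrable (f j) := fun j =>
    (integrableOn_exp_waveS hM (ξ j)).integrable_indicator measurableSet_Ioi
  have hfnonneg : ∀ j s, 0 ≤ f j s := by
    intro j s
    apply Set.indicator_nonneg
    intro s _
    exact mul_nonneg (Real.exp_nonneg _) (waveS_nonneg _ _)
  set g : (Fin n → ℝ) → ℝ := fun v => ∏ j, f j (v j) with hg
  have hgint : Integrable g := Integrable.fintype_prod fun j => hfint j
  have hgnonneg : ∀ v, 0 ≤ g v := fun v =>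
    Finset.prod_nonneg fun j _ => hfnonneg j (v j)
  set c : Fin n → ℝ := fun j => if (j : ℕ) + 1 < n then 0 else t with hc
  have hTeq : T = (fun v => v + c) ∘ (shiftL n) := by
    funext u j
    simp only [hT, hc, Function.comp_apply, Pi.add_apply, shiftL, LinearMap.coe_mk,
      AddHom.coe_mk, nextVal]
    by_cases h : (j : ℕ) + 1 < n
    · simp [h]
    · simp [h]; ring
  have hTmp : MeasurePreserving T volume volume := by
    rw [hTeq]
    exact (measurePreserving_add_right volume c).comp (shiftL_measurePreserving n)
  have hTemb : MeasurableEmbedding T := by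
    rw [hTeq]
    exact (Homeomorph.addRight c).measurableEmbedding.comp (shiftL_measurableEmbedding n)
  -- positivity of the increments on the simplex
  have hpos : ∀ u ∈ simplex n t, ∀ j : Fin n, 0 < T u j := by
    rintro u ⟨h1, h2⟩ j
    simp only [hT, nextVal]
    by_cases h : (j : ℕ) + 1 < n
    · rw [dif_pos h]
      have := h2 j ⟨(j : ℕ) + 1, h⟩ (by simp [Fin.lt_def])
      linarith
    · rw [dif_neg h]
      have := (h1 j).2
      linarith
  -- pointwise bound on the simplex
  have hpt : ∀ u ∈ simplex n t,
      (∏ j, waveS (T u j) (ξ j)) ≤ Real.exp (M * t) * g (T u) := by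
    intro u hu
    have hTu : ∀ j, 0 < T u j := hpos u hu
    have hgTu : g (T u) =
        (∏ j, Real.exp (-(M * T u j))) * ∏ j, waveS (T u j) (ξ j) := by
      rw [hg, ← Finset.prod_mul_distrib]
      refine Finset.prod_congr rfl fun j _ => ?_
      rw [hf]
      exact Set.indicator_of_mem (hTu j) (φ j)
    have hsum : ∑ j, T u j ≤ t := by
      have h0 := sum_nextVal_sub hn t u
      have hu0 : 0 < u ⟨0, hn⟩ := (hu.1 _).1
      simp only [hT]
      rw [h0]
      linarith
    have h1 : (1:ℝ) ≤ Real.exp (M * t) * Real.exp (∑ j, -(M * T u j)) := by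
      have hsn : ∑ j, -(M * T u j) = -(M * ∑ j, T u j) := by
        rw [Finset.mul_sum, ← Finset.sum_neg_distrib]
      rw [← Real.exp_add]
      have h2 : (0:ℝ) ≤ M * t + ∑ j, -(M * T u j) := by
        rw [hsn]
        nlinarith
      calc (1:ℝ) = Real.exp 0 := Real.exp_zero.symm
        _ ≤ _ := Real.exp_le_exp.2 h2
    calc ∏ j, waveS (T u j) (ξ j) = 1 * ∏ j, waveS (T u j) (ξ j) := (one_mul _).symm
      _ ≤ (Real.exp (M * t) * Real.exp (∑ j, -(M * T u j))) * ∏ j, waveS (T u j) (ξ j) :=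
          mul_le_mul_of_nonneg_right h1
            (Finset.prod_nonneg fun j _ => waveS_nonneg _ _)
      _ = Real.exp (M * t) * g (T u) := by
          rw [hgTu, Real.exp_sum]
          ring
  -- continuity of the integrand
  have hTcont : ∀ j, Continuous fun u : Fin n → ℝ => T u j := by
    intro j
    simp only [hT, nextVal]
    by_cases h : (j : ℕ) + 1 < n
    · simp only [dif_pos h]
      exact (continuous_apply _).sub (continuous_apply j)
    · simp only [dif_neg h]
      exact continuous_const.sub (continuous_apply j)
  have h0cont : Continuous fun u => ∏ j, waveS (T u j) (ξ j) :=
    continuous_finset_prod _ fun j _ => (continuous_waveS (ξ j)).comp (hTcont j)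
  -- integrability
  have hgT : Integrable (fun u => g (T u)) := (hTmp.integrable_comp_emb hTemb).2 hgint
  have hmaj : Integrable (fun u => Real.exp (M * t) * g (T u)) := hgT.const_mul _
  have h0int : IntegrableOn (fun u => ∏ j, waveS (T u j) (ξ j)) (simplex n t) := by
    apply Integrable.mono' hmaj.integrableOn h0cont.aestronglyMeasurable.restrict
    refine (ae_restrict_iff' hms).2 (Filter.Eventually.of_forall fun u hu => ?_)
    rw [Real.norm_eq_abs,
      abs_of_nonneg (Finset.prod_nonneg fun j _ => waveS_nonneg _ _)]
    exact hpt u hu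
  -- the main chain
  calc (∫ u in simplex n t, ∏ j, waveS (nextVal t u j - u j) (ξ j))
      = ∫ u in simplex n t, ∏ j, waveS (T u j) (ξ j) := rfl
    _ ≤ ∫ u in simplex n t, Real.exp (M * t) * g (T u) :=
        setIntegral_mono_on h0int hmaj.integrableOn hms fun u hu => hpt u hu
    _ = Real.exp (M * t) * ∫ u in simplex n t, g (T u) := integral_const_mul _ _
    _ = Real.exp (M * t) * ∫ v in T '' simplex n t, g v := by
        rw [hTmp.setIntegral_image_emb hTemb g]
    _ ≤ Real.exp (M * t) * ∫ v, g v :=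
        mul_le_mul_of_nonneg_left
          (setIntegral_le_integral hgint (Filter.Eventually.of_forall hgnonneg))
          (Real.exp_nonneg _)
    _ = Real.exp (M * t) * ∏ j, ∫ s, f j s := by
        rw [hg, integral_fintype_prod_volume_eq_prod (f := f)]
    _ = Real.exp (M * t) * ∏ j, (2 / M) * (1 / (M ^ 2 + 4 * ξ j ^ 2)) := by
        congr 1
        refine Finset.prod_congr rfl fun j _ => ?_
        rw [hf]
        rw [integral_indicator measurableSet_Ioi]
        exact integral_exp_waveS hM (ξ j)
    _ = Real.exp (M * t) * (2 / M) ^ n * ∏ j, 1 / (M ^ 2 + 4 * ξ j ^ 2) := by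
        rw [Finset.prod_mul_distrib, Finset.prod_const, Finset.card_univ,
          Fintype.card_fin, mul_assoc]
end

section
/- Let γ: ℝ → [0,∞] be measurable, symmetric (γ(−s) = γ(s)) and locally integrable, and set Γ_t = 2∫₀ᵗ γ(s) ds. Let μ be a Borel measure on ℝ satisfying Dalang's condition ∫_ℝ 1/(1+ξ²) μ(dξ) < ∞. For s ≥ 0 let h_s(ξ) = sin(sξ)/ξ (with h_s(0) = s), so that h_s ∈ L²(μ). Then for every t > 0, φ(t) := ∫₀ᵗ∫₀ᵗ γ(s−s′) ( ∫_ℝ h_s(ξ) h_{s′}(ξ) μ(dξ) ) ds ds′ ≤ Γ_t · ∫₀ᵗ ( ∫_ℝ h_s(ξ)² μ(dξ) ) ds =: Γ_t · ψ₀(t). (This is the paper's Lemma 6.4, φ(t) ≤ Γ_t ψ₀(t), in spectral form.) -/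
open MeasureTheory
open scoped ENNReal Topology

/-- `h_s(ξ) = sin(sξ)/ξ` (with `h_s(0) = s`): the Fourier transform of the
one-dimensional wave kernel `G(s,x) = (1/2)·1_{|x|<s}`. -/
noncomputable def waveH (s ξ : ℝ) : ℝ :=
  if ξ = 0 then s else Real.sin (s * ξ) / ξ



lemma waveH_meas (s : ℝ) : Measurable (waveH s) := by
  unfold waveH
  exact Measurable.ite (measurableSet_eq_fun measurable_id measurable_const)
    measurable_const ((Real.measurable_sin.comp (measurable_const.mul measurable_id)).div measurable_id)

lemma waveH_cont (ξ : ℝ) : Continuous (fun s => waveH s ξ) := by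
  unfold waveH
  by_cases h : ξ = 0 <;> simp only [h, if_true, if_false]
  · exact continuous_id
  · exact (Real.continuous_sin.comp (continuous_id.mul continuous_const)).div_const ξ

lemma abs_mul_le_half (a b : ℝ) : |a * b| ≤ (a ^ 2 + b ^ 2) / 2 := by
  rcases abs_cases (a * b) with ⟨h, _⟩ | ⟨h, _⟩ <;> rw [h] <;>
    nlinarith [sq_nonneg (a - b), sq_nonneg (a + b)]

lemma waveH_sq_le (s ξ : ℝ) :
    waveH s ξ ^ 2 ≤ (2 * max 1 (s ^ 2)) * (1 / (1 + ξ ^ 2)) := by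
  have hM1 : (1 : ℝ) ≤ max 1 (s ^ 2) := le_max_left _ _
  have hMs : s ^ 2 ≤ max 1 (s ^ 2) := le_max_right _ _
  unfold waveH
  split_ifs with h
  · subst h; norm_num; nlinarith
  · have hξ2 : (0 : ℝ) < ξ ^ 2 := by positivity
    have h1p : (0 : ℝ) < 1 + ξ ^ 2 := by positivity
    rw [div_pow, mul_one_div, div_le_div_iff₀ hξ2 h1p]
    have hs1 : Real.sin (s * ξ) ^ 2 ≤ 1 := by
      nlinarith [Real.neg_one_le_sin (s * ξ), Real.sin_le_one (s * ξ)]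
    have hs2 : Real.sin (s * ξ) ^ 2 ≤ (s * ξ) ^ 2 := Real.sin_sq_le_sq
    rcases le_total (ξ ^ 2) 1 with hc | hc
    · nlinarith
    · nlinarith




section
variable {μ : Measure ℝ} (hD : ∫⁻ ξ, ENNReal.ofReal (1 / (1 + ξ ^ 2)) ∂μ < ⊤)

lemma int_one_add_sq (hD : ∫⁻ ξ, ENNReal.ofReal (1 / (1 + ξ ^ 2)) ∂μ < ⊤) :
    Integrable (fun ξ : ℝ => 1 / (1 + ξ ^ 2)) μ := by
  have hm : Measurable fun ξ : ℝ => 1 / (1 + ξ ^ 2) := by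
    apply Measurable.div measurable_const
    exact measurable_const.add (measurable_id.pow_const 2)
  refine ⟨hm.aestronglyMeasurable, ?_⟩
  rw [hasFiniteIntegral_iff_ofReal ?h]
  · exact hD
  · exact Filter.Eventually.of_forall fun ξ => by positivity

lemma waveH_mul_abs_le (s s' ξ : ℝ) :
    |waveH s ξ * waveH s' ξ| ≤ (max 1 (s ^ 2) + max 1 (s' ^ 2)) * (1 / (1 + ξ ^ 2)) := by
  have h1 := waveH_sq_le s ξ
  have h2 := waveH_sq_le s' ξ
  have h3 := abs_mul_le_half (waveH s ξ) (waveH s' ξ)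
  nlinarith

lemma waveH_mul_abs_le' {b s s' : ℝ} (hs : |s| ≤ b) (hs' : |s'| ≤ b) (ξ : ℝ) :
    |waveH s ξ * waveH s' ξ| ≤ (2 * max 1 (b ^ 2)) * (1 / (1 + ξ ^ 2)) := by
  have h := waveH_mul_abs_le s s' ξ
  have hb : s ^ 2 ≤ b ^ 2 := by nlinarith [abs_nonneg s, neg_abs_le s, le_abs_self s]
  have hb' : s' ^ 2 ≤ b ^ 2 := by nlinarith [abs_nonneg s', neg_abs_le s', le_abs_self s']
  have h1 : max 1 (s ^ 2) ≤ max 1 (b ^ 2) := max_le_max le_rfl hb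
  have h2 : max 1 (s' ^ 2) ≤ max 1 (b ^ 2) := max_le_max le_rfl hb'
  have hpos : (0:ℝ) ≤ 1 / (1 + ξ ^ 2) := by positivity
  nlinarith

lemma integrable_waveH_mul (hD : ∫⁻ ξ, ENNReal.ofReal (1 / (1 + ξ ^ 2)) ∂μ < ⊤) (s s' : ℝ) :
    Integrable (fun ξ => waveH s ξ * waveH s' ξ) μ := by
  refine Integrable.mono' (((int_one_add_sq hD).const_mul
      (max 1 (s ^ 2) + max 1 (s' ^ 2)))) ?_ ?_
  · exact ((waveH_meas s).mul (waveH_meas s')).aestronglyMeasurable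
  · exact Filter.Eventually.of_forall fun ξ => by
      simpa [Real.norm_eq_abs, abs_mul, mul_one_div] using waveH_mul_abs_le s s' ξ

lemma integrable_waveH_sq (hD : ∫⁻ ξ, ENNReal.ofReal (1 / (1 + ξ ^ 2)) ∂μ < ⊤) (s : ℝ) :
    Integrable (fun ξ => waveH s ξ ^ 2) μ := by
  have := integrable_waveH_mul hD s s
  simpa [sq] using this

lemma memLp_waveH (hD : ∫⁻ ξ, ENNReal.ofReal (1 / (1 + ξ ^ 2)) ∂μ < ⊤) (s : ℝ) : MemLp (fun ξ => waveH s ξ) 2 μ :=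
  (memLp_two_iff_integrable_sq (waveH_meas s).aestronglyMeasurable).mpr
    (integrable_waveH_sq hD s)

lemma gsq_cont (hD : ∫⁻ ξ, ENNReal.ofReal (1 / (1 + ξ ^ 2)) ∂μ < ⊤) :
    Continuous (fun s : ℝ => ∫ ξ, waveH s ξ ^ 2 ∂μ) := by
  rw [continuous_iff_continuousAt]
  intro s₀
  set b : ℝ := |s₀| + 1 with hb
  have hevset : ∀ᶠ s : ℝ in nhds s₀, |s| < b := by
    refine (continuous_abs.continuousAt).eventually_lt continuousAt_const ?_
    rw [hb]; linarith
  refine continuousAt_of_dominated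
      (bound := fun ξ => (2 * max 1 (b ^ 2)) * (1 / (1 + ξ ^ 2))) ?_ ?_ ?_ ?_
  · exact Filter.Eventually.of_forall fun s =>
      ((waveH_meas s).pow_const 2).aestronglyMeasurable
  · refine hevset.mono fun s hs => Filter.Eventually.of_forall fun ξ => ?_
    have := waveH_mul_abs_le' hs.le hs.le ξ
    calc ‖waveH s ξ ^ 2‖ = |waveH s ξ * waveH s ξ| := by
          rw [Real.norm_eq_abs]; congr 1; ring
      _ ≤ (2 * max 1 (b ^ 2)) * (1 / (1 + ξ ^ 2)) := this
  · exact (int_one_add_sq hD).const_mul _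
  · exact Filter.Eventually.of_forall fun ξ =>
      ((waveH_cont ξ).pow 2).continuousAt

end



lemma ofReal_integral_le {α : Type*} [MeasurableSpace α] (μ : Measure α) (f : α → ℝ) :
    ENNReal.ofReal (∫ x, f x ∂μ) ≤ ∫⁻ x, ENNReal.ofReal (f x) ∂μ := by
  by_cases hf : Integrable f μ
  · have h1 : ∫ x, f x ∂μ ≤ ∫ x, max (f x) 0 ∂μ :=
      integral_mono hf hf.pos_part fun x => le_max_left _ _
    have h2 : ∫ x, max (f x) 0 ∂μ =
        (∫⁻ x, ENNReal.ofReal (max (f x) 0) ∂μ).toReal :=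
      integral_eq_lintegral_of_nonneg_ae
        (Filter.Eventually.of_forall fun x => le_max_right _ _)
        hf.pos_part.aestronglyMeasurable
    have h3 : ∀ x, ENNReal.ofReal (max (f x) 0) = ENNReal.ofReal (f x) := by
      intro x
      rcases le_total (f x) 0 with h | h
      · rw [max_eq_right h, ENNReal.ofReal_zero, ENNReal.ofReal_eq_zero.mpr h]
      · rw [max_eq_left h]
    simp only [h3] at h2
    calc ENNReal.ofReal (∫ x, f x ∂μ) ≤ ENNReal.ofReal ((∫⁻ x, ENNReal.ofReal (f x) ∂μ).toReal) :=
          ENNReal.ofReal_le_ofReal (h2 ▸ h1)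
      _ ≤ ∫⁻ x, ENNReal.ofReal (f x) ∂μ := ENNReal.ofReal_toReal_le
  · rw [integral_undef hf]; simp

-- γ shift lemmas
section
variable (γ : ℝ → ℝ≥0∞) (hγm : Measurable γ) (hγs : ∀ s : ℝ, γ (-s) = γ s)

lemma shift_le₁ {t s : ℝ} (hs0 : 0 ≤ s) (hst : s ≤ t) :
    ∫⁻ s' in Set.Ioc (0:ℝ) t, γ (s - s') ≤ ∫⁻ u in Set.Icc (-t) t, γ u := by
  calc ∫⁻ s' in Set.Ioc (0:ℝ) t, γ (s - s')
      ≤ ∫⁻ s' in Set.Icc (0:ℝ) t, γ (s - s') := lintegral_mono_set Set.Ioc_subset_Icc_self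
    _ = ∫⁻ u in (fun x => s - x) '' Set.Icc (0:ℝ) t, γ u :=
        (Measure.measurePreserving_sub_left volume s).setLIntegral_comp_emb
          (MeasurableEquiv.subLeft s).measurableEmbedding γ _
    _ ≤ ∫⁻ u in Set.Icc (-t) t, γ u := by
        apply lintegral_mono_set
        rw [Set.image_const_sub_Icc]
        exact Set.Icc_subset_Icc (by linarith) (by linarith)

lemma shift_le₂ {t s' : ℝ} (hs0 : 0 ≤ s') (hst : s' ≤ t) :
    ∫⁻ s in Set.Ioc (0:ℝ) t, γ (s - s') ≤ ∫⁻ u in Set.Icc (-t) t, γ u := by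
  calc ∫⁻ s in Set.Ioc (0:ℝ) t, γ (s - s')
      ≤ ∫⁻ s in Set.Icc (0:ℝ) t, γ (s - s') := lintegral_mono_set Set.Ioc_subset_Icc_self
    _ = ∫⁻ u in (fun x => x - s') '' Set.Icc (0:ℝ) t, γ u :=
        (measurePreserving_sub_right volume s').setLIntegral_comp_emb
          (MeasurableEquiv.subRight s').measurableEmbedding γ _
    _ ≤ ∫⁻ u in Set.Icc (-t) t, γ u := by
        apply lintegral_mono_set
        rw [Set.image_sub_const_Icc]
        exact Set.Icc_subset_Icc (by linarith) (by linarith)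

lemma gamma_fold (hγs : ∀ s : ℝ, γ (-s) = γ s) {t : ℝ} (ht : 0 < t) :
    ∫⁻ u in Set.Icc (-t) t, γ u = 2 * ∫⁻ u in Set.Ioc (0:ℝ) t, γ u := by
  have hsplit : Set.Icc (-t) t = Set.Icc (-t) 0 ∪ Set.Ioc (0:ℝ) t :=
    (Set.Icc_union_Ioc_eq_Icc (by linarith) ht.le).symm
  have hdisj : Disjoint (Set.Icc (-t) (0:ℝ)) (Set.Ioc (0:ℝ) t) := by
    rw [Set.disjoint_left]
    rintro x ⟨_, hx0⟩ ⟨hx0', _⟩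
    exact absurd hx0 (not_le.mpr hx0')
  rw [hsplit, lintegral_union measurableSet_Ioc hdisj]
  have hneg : ∫⁻ u in Set.Icc (-t) (0:ℝ), γ u = ∫⁻ u in Set.Icc (0:ℝ) t, γ u := by
    have := (Measure.measurePreserving_neg (volume : Measure ℝ)).setLIntegral_comp_emb
      (MeasurableEquiv.neg ℝ).measurableEmbedding γ (Set.Icc (0:ℝ) t)
    rw [show (Neg.neg '' Set.Icc (0:ℝ) t) = Set.Icc (-t) (0:ℝ) by
          rw [Set.image_neg_eq_neg, Set.neg_Icc, neg_zero]] at this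
    rw [← this]
    exact setLIntegral_congr_fun measurableSet_Icc
      (fun x _ => (hγs x).symm) |>.symm
  have hIoc : ∫⁻ u in Set.Icc (0:ℝ) t, γ u = ∫⁻ u in Set.Ioc (0:ℝ) t, γ u := by
    refine setLIntegral_congr ?_
    exact (Ioc_ae_eq_Icc).symm
  rw [hneg, hIoc, two_mul]
end


set_option maxHeartbeats 2000000 in
theorem stmt8 (γ : ℝ → ℝ≥0∞) (hγm : Measurable γ) (hγs : ∀ s : ℝ, γ (-s) = γ s)
    (hγloc : ∀ K : Set ℝ, IsCompact K → ∫⁻ s in K, γ s < ⊤)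
    (μ : Measure ℝ) (hDalang : ∫⁻ ξ, ENNReal.ofReal (1 / (1 + ξ ^ 2)) ∂μ < ⊤)
    (t : ℝ) (ht : 0 < t) :
    (∀ s : ℝ, 0 ≤ s → MemLp (fun ξ => waveH s ξ) 2 μ) ∧
    (∫ s in (0 : ℝ)..t, ∫ s' in (0 : ℝ)..t,
        (γ (s - s')).toReal * ∫ ξ, waveH s ξ * waveH s' ξ ∂μ) ≤
      (2 * (∫⁻ s in Set.Ioc (0 : ℝ) t, γ s).toReal) *
        ∫ s in (0 : ℝ)..t, ∫ ξ, waveH s ξ ^ 2 ∂μ := by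
  refine ⟨fun s _ => memLp_waveH hDalang s, ?_⟩
  -- notation
  set m : ℝ → ℝ → ℝ := fun s s' => ∫ ξ, waveH s ξ * waveH s' ξ ∂μ with hm
  set g : ℝ → ℝ := fun s => ∫ ξ, waveH s ξ ^ 2 ∂μ with hgdef
  set ΓE : ℝ≥0∞ := ∫⁻ u in Set.Icc (-t) t, γ u with hΓE
  have hΓfin : ΓE < ⊤ := hγloc _ isCompact_Icc
  have hfold : ΓE = 2 * ∫⁻ u in Set.Ioc (0:ℝ) t, γ u := gamma_fold γ hγs ht
  have hgcont : Continuous g := by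
    rw [hgdef]
    exact gsq_cont hDalang
  have hg0 : ∀ s, 0 ≤ g s := fun s => integral_nonneg fun ξ => sq_nonneg _
  -- bound for |m|
  have habs : ∀ s s', |m s s'| ≤ (g s + g s') / 2 := by
    intro s s'
    have h1 : |m s s'| ≤ ∫ ξ, |waveH s ξ * waveH s' ξ| ∂μ := by
      have := norm_integral_le_integral_norm (μ := μ) (fun ξ => waveH s ξ * waveH s' ξ)
      simp only [Real.norm_eq_abs] at this
      exact this
    have h2 : ∫ ξ, |waveH s ξ * waveH s' ξ| ∂μ
        ≤ ∫ ξ, (waveH s ξ ^ 2 + waveH s' ξ ^ 2) / 2 ∂μ :=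
      integral_mono (integrable_waveH_mul hDalang s s').abs
        (((integrable_waveH_sq hDalang s).add (integrable_waveH_sq hDalang s')).div_const 2)
        (fun ξ => abs_mul_le_half _ _)
    have h3 : ∫ ξ, (waveH s ξ ^ 2 + waveH s' ξ ^ 2) / 2 ∂μ = (g s + g s') / 2 := by
      rw [integral_div, integral_add (integrable_waveH_sq hDalang s)
        (integrable_waveH_sq hDalang s')]
    linarith [h1, h2, h3.le, h3.ge]
  -- pointwise kernel bound in ℝ≥0∞
  have hker : ∀ s s', ENNReal.ofReal ((γ (s - s')).toReal * m s s')
      ≤ γ (s - s') * ENNReal.ofReal ((g s + g s') / 2) := by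
    intro s s'
    by_cases htop : γ (s - s') = ⊤
    · simp [htop]
    · have h1 : (γ (s - s')).toReal * m s s'
          ≤ (γ (s - s')).toReal * ((g s + g s') / 2) :=
        mul_le_mul_of_nonneg_left ((le_abs_self _).trans (habs s s')) ENNReal.toReal_nonneg
      calc ENNReal.ofReal ((γ (s - s')).toReal * m s s')
          ≤ ENNReal.ofReal ((γ (s - s')).toReal * ((g s + g s') / 2)) :=
            ENNReal.ofReal_le_ofReal h1
        _ = γ (s - s') * ENNReal.ofReal ((g s + g s') / 2) := by
            rw [ENNReal.ofReal_mul ENNReal.toReal_nonneg, ENNReal.ofReal_toReal htop]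
  -- og
  set og : ℝ → ℝ≥0∞ := fun s => ENNReal.ofReal (g s / 2) with hog
  have hogm : Measurable og := ENNReal.measurable_ofReal.comp (hgcont.measurable.div_const 2)
  set LG2 : ℝ≥0∞ := ∫⁻ s in Set.Ioc (0:ℝ) t, og s with hLG2
  -- the ℝ≥0∞ chain
  have key : ENNReal.ofReal (∫ s in Set.Ioc (0:ℝ) t,
        (∫ s' in Set.Ioc (0:ℝ) t, (γ (s - s')).toReal * m s s')) ≤ ΓE * (2 * LG2) := by
    have hmeas1 : ∀ s : ℝ, Measurable fun s' => γ (s - s') :=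
      fun s => hγm.comp (measurable_const.sub measurable_id)
    calc ENNReal.ofReal (∫ s in Set.Ioc (0:ℝ) t,
            (∫ s' in Set.Ioc (0:ℝ) t, (γ (s - s')).toReal * m s s'))
        ≤ ∫⁻ s in Set.Ioc (0:ℝ) t, ENNReal.ofReal
            (∫ s' in Set.Ioc (0:ℝ) t, (γ (s - s')).toReal * m s s') :=
          ofReal_integral_le _ _
      _ ≤ ∫⁻ s in Set.Ioc (0:ℝ) t, ∫⁻ s' in Set.Ioc (0:ℝ) t,
            ENNReal.ofReal ((γ (s - s')).toReal * m s s') :=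
          lintegral_mono fun s => ofReal_integral_le _ _
      _ ≤ ∫⁻ s in Set.Ioc (0:ℝ) t, ∫⁻ s' in Set.Ioc (0:ℝ) t,
            (γ (s - s') * og s + γ (s - s') * og s') := by
          refine lintegral_mono fun s => lintegral_mono fun s' => ?_
          refine (hker s s').trans (le_of_eq ?_)
          rw [← mul_add, hog]
          congr 1
          rw [← ENNReal.ofReal_add (by positivity) (by positivity)]
          congr 1
          ring
      _ = (∫⁻ s in Set.Ioc (0:ℝ) t, ∫⁻ s' in Set.Ioc (0:ℝ) t, γ (s - s') * og s)
          + ∫⁻ s in Set.Ioc (0:ℝ) t, ∫⁻ s' in Set.Ioc (0:ℝ) t, γ (s - s') * og s' := by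
          rw [← lintegral_add_left]
          · exact lintegral_congr fun s => lintegral_add_left ((hmeas1 s).mul_const _) _
          · exact Measurable.lintegral_prod_right'
              ((hγm.comp ((measurable_fst.sub measurable_snd))).mul (hogm.comp measurable_fst))
      _ ≤ ΓE * LG2 + ΓE * LG2 := by
          gcongr
          · -- first term
            calc ∫⁻ s in Set.Ioc (0:ℝ) t, ∫⁻ s' in Set.Ioc (0:ℝ) t, γ (s - s') * og s
                = ∫⁻ s in Set.Ioc (0:ℝ) t, og s * ∫⁻ s' in Set.Ioc (0:ℝ) t, γ (s - s') := by
                  refine lintegral_congr fun s => ?_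
                  rw [← lintegral_const_mul _ (hmeas1 s)]
                  exact lintegral_congr fun s' => mul_comm _ _
              _ ≤ ∫⁻ s in Set.Ioc (0:ℝ) t, og s * ΓE := by
                  refine setLIntegral_mono (hogm.mul_const _) fun s hs => ?_
                  exact mul_le_mul_right (shift_le₁ γ hs.1.le hs.2) _
              _ = ΓE * LG2 := by
                  rw [lintegral_mul_const _ hogm, mul_comm]
          · -- second term: swap
            calc ∫⁻ s in Set.Ioc (0:ℝ) t, ∫⁻ s' in Set.Ioc (0:ℝ) t, γ (s - s') * og s'
                = ∫⁻ s' in Set.Ioc (0:ℝ) t, ∫⁻ s in Set.Ioc (0:ℝ) t, γ (s - s') * og s' :=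
                  lintegral_lintegral_swap
                    (((hγm.comp ((measurable_fst.sub measurable_snd))).mul
                      (hogm.comp measurable_snd)).aemeasurable)
              _ = ∫⁻ s' in Set.Ioc (0:ℝ) t, og s' * ∫⁻ s in Set.Ioc (0:ℝ) t, γ (s - s') := by
                  refine lintegral_congr fun s' => ?_
                  rw [← lintegral_const_mul _
                    (show Measurable fun u : ℝ => γ (u - s') from
                      hγm.comp (measurable_id.sub measurable_const))]
                  exact lintegral_congr fun s => mul_comm _ _
              _ ≤ ∫⁻ s' in Set.Ioc (0:ℝ) t, og s' * ΓE := by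
                  refine setLIntegral_mono (hogm.mul_const _) fun s' hs' => ?_
                  exact mul_le_mul_right (shift_le₂ γ hs'.1.le hs'.2) _
              _ = ΓE * LG2 := by
                  rw [lintegral_mul_const _ hogm, mul_comm]
      _ = ΓE * (2 * LG2) := by ring
  -- identification of 2 * LG2
  have hLGfull : ∫⁻ s in Set.Ioc (0:ℝ) t, ENNReal.ofReal (g s) = 2 * LG2 := by
    rw [hLG2, ← lintegral_const_mul 2 hogm]
    refine lintegral_congr fun s => ?_
    rw [hog]
    rw [← ENNReal.ofReal_ofNat 2, ← ENNReal.ofReal_mul (by norm_num)]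
    congr 1
    ring
  -- finiteness
  have hDr : Integrable (fun ξ : ℝ => 1 / (1 + ξ ^ 2)) μ := int_one_add_sq hDalang
  set Dr : ℝ := ∫ ξ, 1 / (1 + ξ ^ 2) ∂μ with hDrdef
  have hDr0 : 0 ≤ Dr := integral_nonneg fun ξ => by positivity
  have hgb : ∀ s ∈ Set.Ioc (0:ℝ) t, g s ≤ 2 * max 1 (t ^ 2) * Dr := by
    intro s hs
    have h1 : g s ≤ ∫ ξ, (2 * max 1 (s ^ 2)) * (1 / (1 + ξ ^ 2)) ∂μ :=
      integral_mono (integrable_waveH_sq hDalang s) (hDr.const_mul _)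
        (fun ξ => waveH_sq_le s ξ)
    rw [integral_const_mul] at h1
    have h2 : max 1 (s ^ 2) ≤ max 1 (t ^ 2) :=
      max_le_max le_rfl (by nlinarith [hs.1, hs.2])
    nlinarith [h1, h2, hDr0]
  have hLGfin : (∫⁻ s in Set.Ioc (0:ℝ) t, ENNReal.ofReal (g s)) < ⊤ := by
    calc (∫⁻ s in Set.Ioc (0:ℝ) t, ENNReal.ofReal (g s))
        ≤ ∫⁻ _ in Set.Ioc (0:ℝ) t, ENNReal.ofReal (2 * max 1 (t ^ 2) * Dr) :=
          setLIntegral_mono measurable_const fun s hs =>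
            ENNReal.ofReal_le_ofReal (hgb s hs)
      _ = ENNReal.ofReal (2 * max 1 (t ^ 2) * Dr) * volume (Set.Ioc (0:ℝ) t) :=
          setLIntegral_const _ _
      _ < ⊤ := ENNReal.mul_lt_top ENNReal.ofReal_lt_top (by simp [Real.volume_Ioc])
  have hfin : ΓE * (2 * LG2) < ⊤ := by
    rw [← hLGfull]
    exact ENNReal.mul_lt_top hΓfin hLGfin
  -- conversion back to real
  simp only [intervalIntegral.integral_of_le ht.le]
  set L : ℝ := ∫ s in Set.Ioc (0:ℝ) t,
      (∫ s' in Set.Ioc (0:ℝ) t, (γ (s - s')).toReal * m s s') with hL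
  have hRHSeq : (ΓE * (2 * LG2)).toReal
      = (2 * (∫⁻ s in Set.Ioc (0:ℝ) t, γ s).toReal) * ∫ s in Set.Ioc (0:ℝ) t, g s := by
    rw [← hLGfull, ENNReal.toReal_mul, hfold, ENNReal.toReal_mul, ENNReal.toReal_ofNat]
    congr 1
    rw [integral_eq_lintegral_of_nonneg_ae
      (Filter.Eventually.of_forall fun s => hg0 s)
      (hgcont.aestronglyMeasurable.restrict)]
  have hint0 : 0 ≤ ∫ s in Set.Ioc (0:ℝ) t, g s :=
    integral_nonneg fun s => hg0 s
  rcases le_total L 0 with hL0 | hL0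
  · calc L ≤ 0 := hL0
      _ ≤ _ := by
        rw [← hRHSeq] at *
        exact ENNReal.toReal_nonneg
  · have : L ≤ (ΓE * (2 * LG2)).toReal := by
      rw [← ENNReal.toReal_ofReal hL0]
      exact ENNReal.toReal_mono hfin.ne key
    rw [hRHSeq] at this
    exact this
end
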